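/- arXiv:1705.04280 — 3 statements merged into one kernel-verified Lean document; each statement's English description precedes it below -/
import Mathlib

section
/- Let i ≠ j with m_{ij} < ∞, let u, v be words, and set w₁ = u·{s_is_j}^{m_{ij}}·v, so that ρ(w₁) = ρ(u)·(p,i)(q,j)(p+1,i)⋯·ρ₁ for some p, q ∈ ℕ₀, where the middle block consists of m_{ij} pairs whose second components alternate between i and j, and ρ₁ is some sequence of pairs. Set w₂ = u·{s_js_i}^{m_{ij}}·v. Then w₂ <_l w₁ if and only if both of the following hold: (1) q ≥ 1, and (2) every pair (r,k) occurring in ρ(u) satisfies (r,k) < (q−1,j) in the lexicographic order on ℕ₀ × {1,…,n}. -/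
/-! Words over the alphabet `Fin n`, the map `ρ`, the total order `<_l`,
alternating words, and equivalence of words with respect to a Coxeter matrix. -/

/-- The lexicographic order on pairs `(r, i) ∈ ℕ × Fin n`. -/
def PairLt {n : ℕ} (p q : ℕ × Fin n) : Prop :=
  p.1 < q.1 ∨ (p.1 = q.1 ∧ p.2 < q.2)

/-- Auxiliary function for `rho`: given the previous pair, attach to each letter the
smallest admissible first component. -/
def rhoAux {n : ℕ} : ℕ × Fin n → List (Fin n) → List (ℕ × Fin n)
  | _, [] => []
  | prev, i :: rest =>
      let r : ℕ := if prev.2 < i then prev.1 else prev.1 + 1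
      (r, i) :: rhoAux (r, i) rest

/-- The map `ρ` sending a word `s_{i₁} ⋯ s_{i_m}` to the sequence of pairs
`(r₁,i₁) ⋯ (r_m,i_m)` where `0 = r₁ ≤ ⋯ ≤ r_m` are the smallest non-negative integers
with `(r₁,i₁) < (r₂,i₂) < ⋯ < (r_m,i_m)` lexicographically. -/
def rho {n : ℕ} : List (Fin n) → List (ℕ × Fin n)
  | [] => []
  | i :: rest => (0, i) :: rhoAux (0, i) rest

/-- The total order `<_l` on words: first compare lengths, then compare `ρ`-sequences
lexicographically. -/
def WordLt {n : ℕ} (w w' : List (Fin n)) : Prop :=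
  w.length < w'.length ∨ (w.length = w'.length ∧ List.Lex PairLt (rho w) (rho w'))

/-- The alternating word `{s_i s_j}^a = s_i s_j s_i s_j ⋯` with `a` letters. -/
def altWord {n : ℕ} : Fin n → Fin n → ℕ → List (Fin n)
  | _, _, 0 => []
  | i, j, a + 1 => i :: altWord j i a

/-- Two words are equivalent iff they represent the same element of the Coxeter group. -/
def WordEquiv {n : ℕ} (M : CoxeterMatrix (Fin n)) (w w' : List (Fin n)) : Prop :=
  M.toCoxeterSystem.wordProd w = M.toCoxeterSystem.wordProd w'

/-- A word is leftmost if it is `<_l`-smaller than every other word equivalent to it. -/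
def Leftmost {n : ℕ} (M : CoxeterMatrix (Fin n)) (w : List (Fin n)) : Prop :=
  ∀ w' : List (Fin n), WordEquiv M w w' → w' ≠ w → WordLt w w'

/-- The block of pairs `(p,i)(q,j)(p+1,i)(q+1,j)⋯` with the given number of pairs,
whose second components alternate between `i` and `j`. -/
def pairBlock {n : ℕ} : Fin n → Fin n → ℕ → ℕ → ℕ → List (ℕ × Fin n)
  | _, _, _, _, 0 => []
  | i, j, p, q, a + 1 => (p, i) :: pairBlock j i q (p + 1) a

section Aux

variable {n : ℕ}

lemma pairLt_trans {a b c : ℕ × Fin n} (h1 : PairLt a b) (h2 : PairLt b c) :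
    PairLt a c := by
  rcases h1 with h | ⟨e, h⟩ <;> rcases h2 with h' | ⟨e', h'⟩
  · exact Or.inl (h.trans h')
  · exact Or.inl (e' ▸ h)
  · exact Or.inl (e ▸ h')
  · exact Or.inr ⟨e.trans e', h.trans h'⟩

lemma pairLt_irrefl (a : ℕ × Fin n) : ¬ PairLt a a := by
  rintro (h | ⟨_, h⟩) <;> exact lt_irrefl _ h

lemma lex_cons {x y : ℕ × Fin n} (h : x ≠ y) {s t : List (ℕ × Fin n)} :
    List.Lex PairLt (x :: s) (y :: t) ↔ PairLt x y := by
  constructor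
  · intro hl
    cases hl with
    | rel h' => exact h'
    | cons h' => exact absurd rfl h
  · exact List.Lex.rel

lemma lex_middle (A : List (ℕ × Fin n)) {x y : ℕ × Fin n} (h : x ≠ y) (s t : List (ℕ × Fin n)) :
    List.Lex PairLt (A ++ x :: s) (A ++ y :: t) ↔ PairLt x y := by
  induction A with
  | nil => exact lex_cons h
  | cons a A ih =>
    constructor
    · intro hl
      cases hl with
      | rel h' => exact absurd h' (pairLt_irrefl a)
      | cons h' => exact ih.1 h'
    · exact fun h' => List.Lex.cons (ih.2 h')

lemma rhoAux_cons (pr : ℕ × Fin n) (i : Fin n) (rest : List (Fin n)) :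
    rhoAux pr (i :: rest) =
      ((if pr.2 < i then pr.1 else pr.1 + 1), i) ::
        rhoAux ((if pr.2 < i then pr.1 else pr.1 + 1), i) rest := rfl

lemma rhoAux_append (pr : ℕ × Fin n) (a b : List (Fin n)) :
    rhoAux pr (a ++ b) = rhoAux pr a ++ rhoAux ((rhoAux pr a).getLastD pr) b := by
  induction a generalizing pr with
  | nil => simp [rhoAux]
  | cons i rest ih =>
    rw [List.cons_append, rhoAux_cons, rhoAux_cons, ih, List.getLastD_cons, List.cons_append]

lemma getLastD_mem {α : Type*} : ∀ (l : List α) (d : α), l ≠ [] → l.getLastD d ∈ l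
  | [], _, h => absurd rfl h
  | a :: l, d, _ => by
    rw [List.getLastD_cons]
    rcases eq_or_ne l [] with rfl | h
    · simp
    · exact List.mem_cons_of_mem _ (getLastD_mem l a h)

lemma rhoAux_lt : ∀ (pr : ℕ × Fin n) (l : List (Fin n)) (x), x ∈ rhoAux pr l → PairLt pr x := by
  intro pr l
  induction l generalizing pr with
  | nil => simp [rhoAux]
  | cons i rest ih =>
    intro x hx
    rw [rhoAux_cons] at hx
    have hpr : PairLt pr ((if pr.2 < i then pr.1 else pr.1 + 1), i) := by
      by_cases h : pr.2 < i
      · exact Or.inr ⟨by simp [h], by simpa using h⟩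
      · exact Or.inl (by simp [h])
    rcases List.mem_cons.1 hx with rfl | hx
    · exact hpr
    · exact pairLt_trans hpr (ih _ _ hx)

lemma le_last_of_cons : ∀ (pr : ℕ × Fin n) (rest : List (Fin n)) (x),
    x ∈ pr :: rhoAux pr rest →
      x = (rhoAux pr rest).getLastD pr ∨ PairLt x ((rhoAux pr rest).getLastD pr) := by
  intro pr rest
  induction rest generalizing pr with
  | nil => simp [rhoAux]
  | cons i r' ih =>
    intro x hx
    rw [rhoAux_cons] at hx ⊢
    rw [List.getLastD_cons]
    rcases List.mem_cons.1 hx with rfl | hx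
    · rcases ih ((if x.2 < i then x.1 else x.1 + 1), i) _
          List.mem_cons_self with he | hlt
      · rw [← he]
        right
        by_cases h : x.2 < i
        · exact Or.inr ⟨by simp [h], by simpa using h⟩
        · exact Or.inl (by simp [h])
      · right
        refine pairLt_trans ?_ hlt
        by_cases h : x.2 < i
        · exact Or.inr ⟨by simp [h], by simpa using h⟩
        · exact Or.inl (by simp [h])
    · exact ih _ _ hx

lemma forall_mem_iff_last (pr : ℕ × Fin n) (rest : List (Fin n)) (c : ℕ × Fin n) :
    (∀ x ∈ pr :: rhoAux pr rest, PairLt x c) ↔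
      PairLt ((rhoAux pr rest).getLastD pr) c := by
  constructor
  · intro h
    rcases eq_or_ne (rhoAux pr rest) [] with he | he
    · rw [he]; exact h pr List.mem_cons_self
    · exact h _ (List.mem_cons_of_mem _ (getLastD_mem _ _ he))
  · intro h x hx
    rcases le_last_of_cons pr rest x hx with he | h'
    · exact he ▸ h
    · exact pairLt_trans h' h

lemma altWord_length : ∀ (a : ℕ) (i j : Fin n), (altWord i j a).length = a := by
  intro a
  induction a with
  | zero => intro i j; rfl
  | succ a ih => intro i j; simp [altWord, ih]

end Aux

/-- Lemma on exchanging one relation: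
for `w₁ = u · {s_i s_j}^{m_{ij}} · v` with
`ρ(w₁) = ρ(u) · (p,i)(q,j)(p+1,i)⋯ · ρ₁` (middle block of `m_{ij}` pairs) and
`w₂ = u · {s_j s_i}^{m_{ij}} · v`, one has `w₂ <_l w₁` iff `1 ≤ q` and every pair
in `ρ(u)` is lexicographically smaller than `(q-1, j)`. -/
theorem stmt0 {n : ℕ} (M : CoxeterMatrix (Fin n)) (i j : Fin n) (hij : i ≠ j)
    (hfin : M i j ≠ 0) (u v : List (Fin n)) (p q : ℕ) (ρ₁ : List (ℕ × Fin n))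
    (hρ : rho (u ++ altWord i j (M i j) ++ v)
        = rho u ++ pairBlock i j p q (M i j) ++ ρ₁) :
    WordLt (u ++ altWord j i (M i j) ++ v) (u ++ altWord i j (M i j) ++ v) ↔
      (1 ≤ q ∧ ∀ x ∈ rho u, PairLt x (q - 1, j)) := by
  have hm2 : 2 ≤ M i j := by
    have h1 := M.off_diagonal i j hij
    omega
  obtain ⟨m'', hm⟩ : ∃ k, M i j = k + 2 := ⟨M i j - 2, by omega⟩
  rw [hm] at hρ ⊢
  have hlen : (u ++ altWord j i (m'' + 2) ++ v).length
      = (u ++ altWord i j (m'' + 2) ++ v).length := by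
    simp [altWord_length]
  have halt1 : altWord i j (m'' + 2) ++ v = i :: (j :: (altWord i j m'' ++ v)) := rfl
  have halt2 : altWord j i (m'' + 2) ++ v = j :: (i :: (altWord j i m'' ++ v)) := rfl
  rw [WordLt]
  simp only [hlen, lt_irrefl, false_or, true_and]
  have hijv : (i : ℕ) ≠ (j : ℕ) := fun h => hij (Fin.val_injective h)
  cases u with
  | nil =>
    simp only [List.nil_append] at hρ ⊢
    rw [halt1] at hρ
    rw [show rho (i :: (j :: (altWord i j m'' ++ v)))
        = ((0:ℕ), i) :: rhoAux (0, i) (j :: (altWord i j m'' ++ v)) from rfl,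
      rhoAux_cons] at hρ
    simp only [rho, List.nil_append, pairBlock, List.cons_append,
      List.cons_eq_cons, Prod.mk.injEq] at hρ
    obtain ⟨⟨hp, -⟩, ⟨hq, -⟩, -⟩ := hρ
    rw [halt1, halt2,
      show rho (j :: (i :: (altWord j i m'' ++ v)))
        = ((0:ℕ), j) :: rhoAux (0, j) (i :: (altWord j i m'' ++ v)) from rfl,
      show rho (i :: (j :: (altWord i j m'' ++ v)))
        = ((0:ℕ), i) :: rhoAux (0, i) (j :: (altWord i j m'' ++ v)) from rfl,
      lex_cons (by simp [hij.symm])]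
    simp only [rho, List.not_mem_nil, false_implies, implies_true, and_true]
    simp only [PairLt, Fin.lt_def, lt_self_iff_false, true_and, false_or,
      and_true, eq_self_iff_true] at hq ⊢
    split_ifs at hq <;> omega
  | cons u₀ u' =>
    have hsplit : ∀ w : List (Fin n), rho (u₀ :: u' ++ w)
        = (((0 : ℕ), u₀) :: rhoAux (0, u₀) u')
            ++ rhoAux ((rhoAux ((0 : ℕ), u₀) u').getLastD (0, u₀)) w := by
      intro w
      rw [List.cons_append, rho, rhoAux_append]
      rfl
    set prev : ℕ × Fin n := (rhoAux ((0 : ℕ), u₀) u').getLastD (0, u₀) with hprev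
    rw [List.append_assoc, hsplit, show rho (u₀ :: u')
        = ((0 : ℕ), u₀) :: rhoAux (0, u₀) u' from rfl, List.append_assoc] at hρ
    replace hρ := List.append_cancel_left hρ
    rw [halt1, rhoAux_cons, rhoAux_cons, pairBlock, pairBlock, List.cons_append,
      List.cons_append] at hρ
    simp only [List.cons_eq_cons, Prod.mk.injEq] at hρ
    obtain ⟨⟨hp, -⟩, ⟨hq, -⟩, -⟩ := hρ
    have e2 : rhoAux prev (j :: (i :: (altWord j i m'' ++ v)))
        = ((if prev.2 < j then prev.1 else prev.1 + 1), j)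
            :: rhoAux ((if prev.2 < j then prev.1 else prev.1 + 1), j)
                (i :: (altWord j i m'' ++ v)) := rhoAux_cons _ _ _
    have e1 : rhoAux prev (i :: (j :: (altWord i j m'' ++ v)))
        = ((if prev.2 < i then prev.1 else prev.1 + 1), i)
            :: rhoAux ((if prev.2 < i then prev.1 else prev.1 + 1), i)
                (j :: (altWord i j m'' ++ v)) := rhoAux_cons _ _ _
    rw [List.append_assoc, List.append_assoc, hsplit, hsplit, halt1, halt2, e1, e2,
      lex_middle _ (by simp [hij.symm])]
    rw [show rho (u₀ :: u') = ((0 : ℕ), u₀) :: rhoAux (0, u₀) u' from rfl,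
      forall_mem_iff_last, ← hprev]
    simp only [PairLt, Fin.lt_def, lt_self_iff_false, true_and, false_or,
      and_true, eq_self_iff_true] at hq ⊢
    split_ifs at hq ⊢ <;> omega
end

section
/- For every m ∈ ℕ₀, E(m) = 0 if and only if m ≥ m* − 1. (In particular, when αβ ≥ 4, so that m* = ∞, E(m) ≠ 0 for all m.) -/
/-- The recursively defined quantities `E(m)` for fixed `α, β`:
`E(0) = 1`, `E(1) = α`, `E(2m) = β·E(2m−1) − E(2m−2)` and
`E(2m+1) = α·E(2m) − E(2m−1)` for `m ≥ 1` (subtraction of natural numbers). -/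
def Efun (α β : ℕ) : ℕ → ℕ
  | 0 => 1
  | 1 => α
  | m + 2 => (if m % 2 = 0 then β else α) * Efun α β (m + 1) - Efun α β m

/-- The value `m* ∈ ℕ ∪ {∞}` determined by the product `αβ`. -/
def mStar (α β : ℕ) : ℕ∞ :=
  if α * β = 0 then 2
  else if α * β = 1 then 3
  else if α * β = 2 then 4
  else if α * β = 3 then 6
  else ⊤

lemma Efun_step (α β m : ℕ) :
    Efun α β (m + 2) = (if m % 2 = 0 then β else α) * Efun α β (m + 1) - Efun α β m := rfl

/-- once the sequence hits zero (at a positive index), it stays zero -/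
lemma Efun_zero_tail (α β k : ℕ) (h : Efun α β (k+1) = 0) :
    ∀ t, Efun α β (k+1+t) = 0 := by
  intro t
  induction t with
  | zero => exact h
  | succ n ih =>
    have e : k+1+(n+1) = (k+n) + 2 := by ring
    rw [e, Efun_step]
    have e2 : k + n + 1 = k + 1 + n := by ring
    rw [e2, ih, Nat.mul_zero, Nat.zero_sub]

lemma Efun_zero_of_le (α β k m : ℕ) (h : Efun α β (k+1) = 0) (hm : k+1 ≤ m) :
    Efun α β m = 0 := by
  obtain ⟨t, rfl⟩ := Nat.exists_eq_add_of_le hm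
  exact Efun_zero_tail α β k h t

lemma Efun_iff_of (α β k : ℕ) (hk : Efun α β (k+1) = 0)
    (hlt : ∀ m < k+1, Efun α β m ≠ 0) :
    ∀ m, Efun α β m = 0 ↔ k+1 ≤ m := by
  intro m
  constructor
  · intro h
    by_contra hc
    exact hlt m (by omega) h
  · exact Efun_zero_of_le α β k m hk

/-- positivity invariant when `αβ ≥ 4` -/
lemma Efun_pos4 (α β : ℕ) (h : 4 ≤ α * β) :
    ∀ m, 1 ≤ Efun α β m ∧ 1 ≤ Efun α β (m+1) ∧
      (if (m+1) % 2 = 0 then β else α) * Efun α β m ≤ 2 * Efun α β (m+1) := by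
  have hα : 1 ≤ α := by
    rcases Nat.eq_zero_or_pos α with h' | h'
    · subst h'; rw [Nat.zero_mul] at h; omega
    · exact h'
  intro m
  induction m with
  | zero =>
    refine ⟨le_refl 1, ?_, ?_⟩
    · simpa [Efun] using hα
    · norm_num [Efun]; omega
  | succ n ih =>
    obtain ⟨h1, h2, h3⟩ := ih
    set c₀ := if n % 2 = 0 then β else α with hc₀
    set c₁ := if (n+1) % 2 = 0 then β else α with hc₁
    have hcc : c₀ * c₁ = α * β := by
      rcases Nat.even_or_odd n with he | he
      · have e0 : n % 2 = 0 := Nat.even_iff.mp he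
        rw [hc₀, hc₁, if_pos e0, if_neg (by omega)]; ring
      · have e1 : n % 2 = 1 := Nat.odd_iff.mp he
        rw [hc₀, hc₁, if_neg (by omega), if_pos (by omega)]
    have m1 : c₀ * (c₁ * Efun α β n) ≤ c₀ * (2 * Efun α β (n+1)) :=
      Nat.mul_le_mul_left _ h3
    have m2 : 4 * Efun α β n ≤ (α * β) * Efun α β n :=
      Nat.mul_le_mul_right _ h
    have m3 : c₀ * (c₁ * Efun α β n) = (α * β) * Efun α β n := by
      rw [← mul_assoc, hcc]
    have hkey : 2 * Efun α β n ≤ c₀ * Efun α β (n+1) := by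
      have h4 : 4 * Efun α β n ≤ 2 * (c₀ * Efun α β (n+1)) := by
        calc 4 * Efun α β n ≤ (α * β) * Efun α β n := m2
          _ = c₀ * (c₁ * Efun α β n) := m3.symm
          _ ≤ c₀ * (2 * Efun α β (n+1)) := m1
          _ = 2 * (c₀ * Efun α β (n+1)) := by ring
      omega
    have hE2 : Efun α β (n+2) = c₀ * Efun α β (n+1) - Efun α β n := Efun_step α β n
    have hpos2 : 1 ≤ Efun α β (n+2) := by omega
    refine ⟨h2, hpos2, ?_⟩
    have hc2 : (if (n+1+1) % 2 = 0 then β else α) = c₀ := by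
      rcases Nat.even_or_odd n with he | he
      · have e0 : n % 2 = 0 := Nat.even_iff.mp he
        rw [hc₀, if_pos (by omega), if_pos e0]
      · have e1 : n % 2 = 1 := Nat.odd_iff.mp he
        rw [hc₀, if_neg (by omega), if_neg (by omega)]
    show (if (n+1+1) % 2 = 0 then β else α) * Efun α β (n+1) ≤ 2 * Efun α β (n+2)
    rw [hc2, hE2]
    omega

/-- for every `m ∈ ℕ₀`, `E(m) = 0` iff `m ≥ m* − 1`
(phrased as `m* ≤ m + 1` in `ℕ∞`); in particular, when `αβ ≥ 4` (so `m* = ∞`),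
`E(m) ≠ 0` for all `m`. -/
theorem stmt8 (α β : ℕ) (h0 : α = 0 ↔ β = 0) :
    (∀ m : ℕ, Efun α β m = 0 ↔ mStar α β ≤ (m : ℕ∞) + 1) ∧
    (4 ≤ α * β → ∀ m : ℕ, Efun α β m ≠ 0) := by
  have cast_iff : ∀ (k m : ℕ), ((k:ℕ∞) ≤ (m:ℕ∞) + 1) ↔ k ≤ m + 1 := by
    intro k m
    rw [show ((m:ℕ∞)+1) = ((m+1:ℕ):ℕ∞) by push_cast; ring]
    exact_mod_cast Iff.rfl
  have hpos4 := Efun_pos4 α β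
  constructor
  · intro m
    rcases Nat.lt_or_ge (α * β) 4 with hlt | hge
    · -- finite cases
      interval_cases h : (α * β)
      · -- αβ = 0 : α = β = 0
        have hab : α = 0 ∧ β = 0 := by
          rcases Nat.mul_eq_zero.mp h with h' | h'
          · exact ⟨h', h0.mp h'⟩
          · exact ⟨h0.mpr h', h'⟩
        obtain ⟨rfl, rfl⟩ := hab
        have key := Efun_iff_of 0 0 0 (by decide) (by decide)
        have hm : mStar 0 0 = ((2:ℕ):ℕ∞) := by rw [mStar]; norm_num
        rw [key m, hm, cast_iff]
        omega
      · -- αβ = 1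
        have hab : α = 1 ∧ β = 1 := by
          have hα : α ≤ 1 := Nat.le_of_dvd (by norm_num) ⟨β, h.symm⟩
          interval_cases α <;> omega
        obtain ⟨rfl, rfl⟩ := hab
        have key := Efun_iff_of 1 1 1 (by decide) (by decide)
        have hm : mStar 1 1 = ((3:ℕ):ℕ∞) := by rw [mStar]; norm_num
        rw [key m, hm, cast_iff]
        omega
      · -- αβ = 2
        have hab : (α = 1 ∧ β = 2) ∨ (α = 2 ∧ β = 1) := by
          have hα : α ≤ 2 := Nat.le_of_dvd (by norm_num) ⟨β, h.symm⟩
          interval_cases α <;> omega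
        have hm : mStar α β = ((4:ℕ):ℕ∞) := by rw [mStar]; norm_num [h]
        rcases hab with ⟨rfl, rfl⟩ | ⟨rfl, rfl⟩
        · have key := Efun_iff_of 1 2 2 (by decide) (by decide)
          rw [key m, hm, cast_iff]; omega
        · have key := Efun_iff_of 2 1 2 (by decide) (by decide)
          rw [key m, hm, cast_iff]; omega
      · -- αβ = 3
        have hab : (α = 1 ∧ β = 3) ∨ (α = 3 ∧ β = 1) := by
          have hα : α ≤ 3 := Nat.le_of_dvd (by norm_num) ⟨β, h.symm⟩
          interval_cases α <;> omega
        have hm : mStar α β = ((6:ℕ):ℕ∞) := by rw [mStar]; norm_num [h]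
        rcases hab with ⟨rfl, rfl⟩ | ⟨rfl, rfl⟩
        · have key := Efun_iff_of 1 3 4 (by decide) (by decide)
          rw [key m, hm, cast_iff]; omega
        · have key := Efun_iff_of 3 1 4 (by decide) (by decide)
          rw [key m, hm, cast_iff]; omega
    · -- αβ ≥ 4
      have hm : mStar α β = ⊤ := by
        rw [mStar]
        have h1 : α * β ≠ 0 := by omega
        have h2 : α * β ≠ 1 := by omega
        have h3 : α * β ≠ 2 := by omega
        have h4 : α * β ≠ 3 := by omega
        simp [h1, h2, h3, h4]
      rw [hm]
      constructor
      · intro hz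
        exact absurd hz (by have := (hpos4 hge m).1; omega)
      · intro htop
        rw [top_le_iff, show ((m:ℕ∞)+1) = ((m+1:ℕ):ℕ∞) by push_cast; ring] at htop
        exact absurd htop (ENat.coe_ne_top (m+1))
  · intro hge m
    have := (hpos4 hge m).1
    omega
end

section
/- Let M, X, X′, Y, Y′, Z, T be A-modules and let f₁: M→X, f₂: M→X′, g₁₁: X→Y, g₁₂: X′→Y, g₂₂: X′→Y′, f′₂: X→Z, g′₁: Y→T, g′₂: Z→T be A-module homomorphisms. Assume that the sequence 0 → M → X ⊕ X′ → Y ⊕ Y′ → 0 is exact, where the first map is m ↦ (f₁(m), f₂(m)) and the second map is (x, x′) ↦ (g₁₁(x) + g₁₂(x′), g₂₂(x′)), and that the sequence 0 → X → Y ⊕ Z → T → 0 is exact, where the first map is x ↦ (g₁₁(x), f′₂(x)) and the second map is (y, z) ↦ g′₁(y) + g′₂(z). Then the sequence 0 → M → Z ⊕ X′ → T ⊕ Y′ → 0 is exact, where the first map is m ↦ (−f′₂(f₁(m)), f₂(m)) and the second map is (z, x′) ↦ (g′₂(z) + g′₁(g₁₂(x′)), g₂₂(x′)). -/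
/-- A pair of `A`-module maps `f : P → Q`, `g : Q → R` forms a short exact sequence
`0 → P → Q → R → 0`: `f` is injective, `g` is surjective, and `range f = ker g`. -/
def IsShortExactSeq {A : Type*} [Ring A] {P Q R : Type*}
    [AddCommGroup P] [Module A P] [AddCommGroup Q] [Module A Q]
    [AddCommGroup R] [Module A R] (f : P →ₗ[A] Q) (g : Q →ₗ[A] R) : Prop :=
  Function.Injective f ∧ Function.Surjective g ∧ LinearMap.range f = LinearMap.ker g

/-- over an Artin algebra `A` (an algebra over a commutative artinian
ring `k`, finitely generated as a `k`-module), given exact sequences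
`0 → M → X ⊕ X' → Y ⊕ Y' → 0` (maps `m ↦ (f₁ m, f₂ m)` and
`(x,x') ↦ (g₁₁ x + g₁₂ x', g₂₂ x')`) and `0 → X → Y ⊕ Z → T → 0`
(maps `x ↦ (g₁₁ x, f₂' x)` and `(y,z) ↦ g₁' y + g₂' z`), the sequence
`0 → M → Z ⊕ X' → T ⊕ Y' → 0` with maps `m ↦ (−f₂'(f₁ m), f₂ m)` and
`(z,x') ↦ (g₂' z + g₁'(g₁₂ x'), g₂₂ x')` is exact. -/
theorem stmt10 (k : Type*) [CommRing k] [IsArtinianRing k]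
    (A : Type*) [Ring A] [Algebra k A] [Module.Finite k A]
    (M X X' Y Y' Z T : Type*)
    [AddCommGroup M] [Module A M] [AddCommGroup X] [Module A X]
    [AddCommGroup X'] [Module A X'] [AddCommGroup Y] [Module A Y]
    [AddCommGroup Y'] [Module A Y'] [AddCommGroup Z] [Module A Z]
    [AddCommGroup T] [Module A T]
    (f₁ : M →ₗ[A] X) (f₂ : M →ₗ[A] X')
    (g₁₁ : X →ₗ[A] Y) (g₁₂ : X' →ₗ[A] Y) (g₂₂ : X' →ₗ[A] Y')
    (f₂' : X →ₗ[A] Z) (g₁' : Y →ₗ[A] T) (g₂' : Z →ₗ[A] T)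
    (hex1 : IsShortExactSeq (f₁.prod f₂)
      ((g₁₁.coprod g₁₂).prod (g₂₂ ∘ₗ LinearMap.snd A X X')))
    (hex2 : IsShortExactSeq (g₁₁.prod f₂') (g₁'.coprod g₂')) :
    IsShortExactSeq ((-(f₂' ∘ₗ f₁)).prod f₂)
      ((g₂'.coprod (g₁' ∘ₗ g₁₂)).prod (g₂₂ ∘ₗ LinearMap.snd A Z X')) := by
  obtain ⟨h1inj, h1surj, h1ex⟩ := hex1
  obtain ⟨h2inj, h2surj, h2ex⟩ := hex2
  have h1k : ∀ m : M, g₁₁ (f₁ m) + g₁₂ (f₂ m) = 0 ∧ g₂₂ (f₂ m) = 0 := by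
    intro m
    have hm : ((f₁ m, f₂ m) : X × X') ∈
        LinearMap.ker ((g₁₁.coprod g₁₂).prod (g₂₂ ∘ₗ LinearMap.snd A X X')) := by
      rw [← h1ex]; exact ⟨m, rfl⟩
    simpa [LinearMap.mem_ker, Prod.ext_iff] using hm
  have h2k : ∀ x : X, g₁' (g₁₁ x) + g₂' (f₂' x) = 0 := by
    intro x
    have hx : ((g₁₁ x, f₂' x) : Y × Z) ∈ LinearMap.ker (g₁'.coprod g₂') := by
      rw [← h2ex]; exact ⟨x, rfl⟩
    simpa using hx
  refine ⟨?_, ?_, ?_⟩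
  · -- injectivity
    rw [injective_iff_map_eq_zero]
    intro m hm
    have h0 : (-f₂' (f₁ m), f₂ m) = ((0 : Z), (0 : X')) := hm
    have hf2 : f₂ m = 0 := (Prod.ext_iff.mp h0).2
    have hz : f₂' (f₁ m) = 0 := by
      have := (Prod.ext_iff.mp h0).1
      simpa [neg_eq_zero] using this
    have hy : g₁₁ (f₁ m) = 0 := by
      have := (h1k m).1
      simpa [hf2] using this
    have hx : f₁ m = 0 := by
      have : (g₁₁.prod f₂') (f₁ m) = (g₁₁.prod f₂') 0 := by
        simp [LinearMap.prod_apply, hy, hz]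
      simpa using h2inj this
    have : (f₁.prod f₂) m = (f₁.prod f₂) 0 := by
      simp [LinearMap.prod_apply, hx, hf2]
    simpa using h1inj this
  · -- surjectivity
    rintro ⟨t, y'⟩
    obtain ⟨⟨x, x'⟩, hxx'⟩ := h1surj ((0 : Y), y')
    have hx2 : g₂₂ x' = y' := (Prod.ext_iff.mp hxx').2
    obtain ⟨⟨y, z⟩, hyz⟩ := h2surj (t - g₁' (g₁₂ x'))
    have hyz' : g₁' y + g₂' z = t - g₁' (g₁₂ x') := hyz
    rw [eq_sub_iff_add_eq] at hyz'
    obtain ⟨⟨x₀, x₀'⟩, hx₀⟩ := h1surj ((y : Y), (0 : Y'))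
    have hx₀1 : g₁₁ x₀ + g₁₂ x₀' = y := (Prod.ext_iff.mp hx₀).1
    have hx₀2 : g₂₂ x₀' = 0 := (Prod.ext_iff.mp hx₀).2
    refine ⟨(z - f₂' x₀, x' + x₀'), ?_⟩
    have e1 : g₁' (g₁₂ x₀') = g₁' y - g₁' (g₁₁ x₀) := by
      rw [← hx₀1]; simp
    have e2 : g₂' (f₂' x₀) = -g₁' (g₁₁ x₀) :=
      eq_neg_of_add_eq_zero_right (h2k x₀)
    have key : g₂' (z - f₂' x₀) + g₁' (g₁₂ (x' + x₀')) = t := by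
      rw [map_sub, map_add, map_add, e1, e2, ← hyz']
      abel
    have key2 : g₂₂ (x' + x₀') = y' := by simp [map_add, hx2, hx₀2]
    simp only [LinearMap.prod_apply, LinearMap.coprod_apply, LinearMap.comp_apply,
      LinearMap.snd_apply, Pi.prod]
    exact Prod.ext key key2
  · -- range = ker
    apply le_antisymm
    · rintro ⟨zz, xx'⟩ ⟨m, hm⟩
      have hm1 : -f₂' (f₁ m) = zz := (Prod.ext_iff.mp hm).1
      have hm2 : f₂ m = xx' := (Prod.ext_iff.mp hm).2
      have h2x := h2k (f₁ m)
      have h1m := h1k m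
      simp only [LinearMap.mem_ker, LinearMap.prod_apply, LinearMap.coprod_apply,
        LinearMap.comp_apply, LinearMap.snd_apply, Function.prod, Prod.ext_iff,
        Prod.fst_zero, Prod.snd_zero]
      constructor
      · rw [← hm1, ← hm2]
        have e : g₁₂ (f₂ m) = -g₁₁ (f₁ m) := eq_neg_of_add_eq_zero_right h1m.1
        have e0 : -(g₁' (g₁₁ (f₁ m)) + g₂' (f₂' (f₁ m))) = 0 := by
          rw [h2x, neg_zero]
        rw [e, map_neg, map_neg, ← e0]
        abel
      · rw [← hm2]; exact h1m.2
    · rintro ⟨zz, xx'⟩ hmem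
      simp only [LinearMap.mem_ker, LinearMap.prod_apply, LinearMap.coprod_apply,
        LinearMap.comp_apply, LinearMap.snd_apply, Function.prod, Prod.ext_iff,
        Prod.fst_zero, Prod.snd_zero] at hmem
      obtain ⟨h1, h2⟩ := hmem
      have hk2 : ((g₁₂ xx', zz) : Y × Z) ∈ LinearMap.ker (g₁'.coprod g₂') := by
        simp only [LinearMap.mem_ker, LinearMap.coprod_apply]
        rw [add_comm]; exact h1
      rw [← h2ex] at hk2
      obtain ⟨x, hx⟩ := hk2
      have hxa : g₁₁ x = g₁₂ xx' := (Prod.ext_iff.mp hx).1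
      have hxb : f₂' x = zz := (Prod.ext_iff.mp hx).2
      have hk1 : ((-x, xx') : X × X') ∈
          LinearMap.ker ((g₁₁.coprod g₁₂).prod (g₂₂ ∘ₗ LinearMap.snd A X X')) := by
        simp only [LinearMap.mem_ker, LinearMap.prod_apply, LinearMap.coprod_apply,
          LinearMap.comp_apply, LinearMap.snd_apply, Function.prod, Prod.ext_iff, map_neg,
          Prod.fst_zero, Prod.snd_zero]
        constructor
        · rw [hxa]; abel
        · exact h2
      rw [← h1ex] at hk1
      obtain ⟨m, hm⟩ := hk1
      have hm1 : f₁ m = -x := (Prod.ext_iff.mp hm).1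
      have hm2 : f₂ m = xx' := (Prod.ext_iff.mp hm).2
      refine ⟨m, ?_⟩
      simp only [LinearMap.prod_apply, LinearMap.neg_apply, LinearMap.comp_apply, Function.prod]
      rw [hm1, hm2, map_neg, neg_neg, hxb]
end
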